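/- Let n ≥ 8 be even with n/2 odd, G = D_{2n} the dihedral group of order 2n, H = ⟨a², b⟩ or H = ⟨a², ab⟩, and g ∈ ⟨a²⟩. If g = 1 then the graph Δ_{H,G}^g is not connected; if g ≠ 1 then there exists a vertex of Δ_{H,G}^g adjacent to all other vertices, so Δ_{H,G}^g is connected and its diameter is at most 2. -/

import Mathlib

open SimpleGraph

/-- `Z(H,G)`: the set of elements of `H` commuting with every element of `G`. -/
def relCenter (G : Type*) [Group G] (H : Subgroup G) : Set G :=
  {x : G | x ∈ H ∧ ∀ y : G, x * y = y * x}

/-- The commutator `[x,y] = x⁻¹y⁻¹xy`. -/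
def comm' {G : Type*} [Group G] (x y : G) : G :=
  x⁻¹ * y⁻¹ * x * y

lemma comm'_swap {G : Type*} [Group G] (x y : G) :
    comm' y x = (comm' x y)⁻¹ := by
  simp only [comm', mul_inv_rev, inv_inv, mul_assoc]

/-- `K(H,G) = {[x,y] : x ∈ H, y ∈ G}`. -/
def relComm (G : Type*) [Group G] (H : Subgroup G) : Set G :=
  {w : G | ∃ x ∈ H, ∃ y : G, comm' x y = w}

/-- The graph `Δ_{H,G}^g`: vertices are the elements of `G \ Z(H,G)`, and two distinct
vertices `x`, `y` are adjacent iff (`x ∈ H` or `y ∈ H`) and `[x,y] ≠ g, g⁻¹`. -/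
def gnc (G : Type*) [Group G] (H : Subgroup G) (g : G) :
    SimpleGraph (((relCenter G H)ᶜ : Set G)) where
  Adj x y := x ≠ y ∧ ((x : G) ∈ H ∨ (y : G) ∈ H) ∧
    comm' (x : G) (y : G) ≠ g ∧ comm' (x : G) (y : G) ≠ g⁻¹
  symm := by
    constructor
    rintro x y ⟨hxy, hH, h1, h2⟩
    refine ⟨fun h => hxy h.symm, hH.symm, ?_, ?_⟩
    · rw [comm'_swap, ne_eq, inv_eq_iff_eq_inv]
      exact h2
    · rw [comm'_swap, ne_eq, inv_eq_iff_eq_inv, inv_inv]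
      exact h1
  loopless := by
    constructor
    rintro x ⟨h, -⟩
    exact h rfl

section Auxiliary

open DihedralGroup

variable {n : ℕ}

lemma comm'_r_r (i j : ZMod n) : comm' (r i) (r j) = 1 := by
  show r (-i) * r (-j) * r i * r j = 1
  rw [r_mul_r, r_mul_r, r_mul_r, DihedralGroup.one_def]
  congr 1; ring

lemma comm'_r_sr (i j : ZMod n) : comm' (r i) (sr j) = r (-(2 * i)) := by
  show r (-i) * sr j * r i * sr j = _
  rw [r_mul_sr, sr_mul_r, sr_mul_sr]
  congr 1; ring

lemma r_one_zpow' (m : ℤ) : (r 1 : DihedralGroup n) ^ m = r (m : ZMod n) := by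
  cases m with
  | ofNat k => rw [Int.ofNat_eq_coe, zpow_natCast, r_one_pow]; norm_cast
  | negSucc k =>
      rw [zpow_negSucc, r_one_pow]
      show r (-((k+1 : ℕ) : ZMod n)) = _
      congr 1
      push_cast
      ring

/-- Parity homomorphism on the dihedral group. -/
def phi (n : ℕ) (h2 : (2:ℕ) ∣ n) (ε : ZMod 2) : DihedralGroup n →* Multiplicative (ZMod 2) where
  toFun x := Multiplicative.ofAdd (match x with
    | DihedralGroup.r i => ZMod.castHom h2 (ZMod 2) i
    | DihedralGroup.sr i => ZMod.castHom h2 (ZMod 2) i + ε)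
  map_one' := by
    show Multiplicative.ofAdd (ZMod.castHom h2 (ZMod 2) 0) = 1
    simp
  map_mul' := by
    rintro (i|i) (j|j) <;>
      simp only [r_mul_r, r_mul_sr, sr_mul_r, sr_mul_sr, map_add, map_sub, ← ofAdd_add] <;>
      congr 1 <;>
      · (try simp only [CharTwo.sub_eq_add])
        abel_nf
        (try simp [CharTwo.two_nsmul, CharTwo.two_eq_zero])

lemma phi_r (h2 : (2:ℕ) ∣ n) (ε : ZMod 2) (i : ZMod n) :
    phi n h2 ε (r i) = Multiplicative.ofAdd (ZMod.castHom h2 (ZMod 2) i) := rfl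

lemma phi_sr (h2 : (2:ℕ) ∣ n) (ε : ZMod 2) (i : ZMod n) :
    phi n h2 ε (sr i) = Multiplicative.ofAdd (ZMod.castHom h2 (ZMod 2) i + ε) := rfl

lemma choose_s (n : ℕ) (hn10 : 10 ≤ n) (hmod : n % 4 = 2) (c : ZMod n) :
    ∃ s : ℕ, (s = 1 ∨ s = 2 ∨ s = 3 ∨ s = 4) ∧
      ((4*s : ℕ) : ZMod n) ≠ 0 ∧ ((4*s : ℕ) : ZMod n) ≠ c ∧ ((4*s : ℕ) : ZMod n) ≠ -c := by
  have hne : ∀ a b : ℕ, a < b → b - a = 4 ∨ b - a = 8 ∨ b - a = 12 →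
      ((a:ℕ) : ZMod n) ≠ (b : ZMod n) := by
    intro a b hab hd h
    rw [ZMod.natCast_eq_natCast_iff, Nat.modEq_iff_dvd' hab.le] at h
    rcases hd with hd|hd|hd <;> rw [hd] at h
    · exact absurd (Nat.le_of_dvd (by norm_num) h) (by omega)
    · exact absurd (Nat.le_of_dvd (by norm_num) h) (by omega)
    · have h12 := Nat.le_of_dvd (by norm_num) h
      interval_cases n <;> omega
  by_contra hcon
  push_neg at hcon
  have mem : ∀ s : ℕ, (s = 1 ∨ s = 2 ∨ s = 3 ∨ s = 4) →
      ((4*s : ℕ) : ZMod n) = 0 ∨ ((4*s:ℕ):ZMod n) = c ∨ ((4*s:ℕ):ZMod n) = -c := by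
    intro s hs
    by_cases h0 : ((4*s:ℕ):ZMod n) = 0
    · exact Or.inl h0
    by_cases h1 : ((4*s:ℕ):ZMod n) = c
    · exact Or.inr (Or.inl h1)
    exact Or.inr (Or.inr (hcon s hs h0 h1))
  have d48 : ((4:ℕ) : ZMod n) ≠ ((8:ℕ) : ZMod n) := hne 4 8 (by norm_num) (by norm_num)
  have d4_12 : ((4:ℕ) : ZMod n) ≠ ((12:ℕ) : ZMod n) := hne 4 12 (by norm_num) (by norm_num)
  have d4_16 : ((4:ℕ) : ZMod n) ≠ ((16:ℕ) : ZMod n) := hne 4 16 (by norm_num) (by norm_num)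
  have d8_12 : ((8:ℕ) : ZMod n) ≠ ((12:ℕ) : ZMod n) := hne 8 12 (by norm_num) (by norm_num)
  have d8_16 : ((8:ℕ) : ZMod n) ≠ ((16:ℕ) : ZMod n) := hne 8 16 (by norm_num) (by norm_num)
  have d12_16 : ((12:ℕ) : ZMod n) ≠ ((16:ℕ) : ZMod n) := hne 12 16 (by norm_num) (by norm_num)
  have m1 := mem 1 (by norm_num)
  have m2 := mem 2 (by norm_num)
  have m3 := mem 3 (by norm_num)
  have m4 := mem 4 (by norm_num)
  rw [show (4*1 : ℕ) = 4 from rfl] at m1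
  rw [show (4*2 : ℕ) = 8 from rfl] at m2
  rw [show (4*3 : ℕ) = 12 from rfl] at m3
  rw [show (4*4 : ℕ) = 16 from rfl] at m4
  rcases m1 with h1|h1|h1 <;> rcases m2 with h2|h2|h2 <;> rcases m3 with h3|h3|h3 <;>
    rcases m4 with h4|h4|h4 <;>
    first
    | exact d48 (h1.trans h2.symm)
    | exact d4_12 (h1.trans h3.symm)
    | exact d4_16 (h1.trans h4.symm)
    | exact d8_12 (h2.trans h3.symm)
    | exact d8_16 (h2.trans h4.symm)
    | exact d12_16 (h3.trans h4.symm)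

lemma reachable_eq_of_no_adj {V : Type*} {G : SimpleGraph V} {x y : V}
    (h : ∀ z, ¬ G.Adj x z) (hr : G.Reachable x y) : x = y := by
  obtain ⟨p⟩ := hr
  cases p with
  | nil => rfl
  | cons ha _ => exact absurd ha (h _)

end Auxiliary

/-- for even `n ≥ 8` with `n/2` odd, `G = D_{2n}`, `H = ⟨a², b⟩` or
`⟨a², ab⟩` and `g ∈ ⟨a²⟩`: if `g = 1` then `Δ_{H,G}^g` is not connected; if
`g ≠ 1` then some vertex is adjacent to all other vertices, the graph is connected,
and its diameter is at most `2`. -/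
theorem stmt18 (n : ℕ) (hn : 8 ≤ n) (hne : Even n) (hodd : Odd (n / 2))
    (H : Subgroup (DihedralGroup n))
    (hH : H = Subgroup.closure {(DihedralGroup.r 1 : DihedralGroup n) ^ 2, DihedralGroup.sr 0} ∨
          H = Subgroup.closure {(DihedralGroup.r 1 : DihedralGroup n) ^ 2, (DihedralGroup.r 1 : DihedralGroup n) * DihedralGroup.sr 0})
    (g : DihedralGroup n)
    (hg : g ∈ Subgroup.zpowers ((DihedralGroup.r 1 : DihedralGroup n) ^ 2)) :
    (g = 1 → ¬ (gnc (DihedralGroup n) H g).Connected) ∧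
    (g ≠ 1 →
      (∃ v, ∀ w, w ≠ v → (gnc (DihedralGroup n) H g).Adj v w) ∧
      (gnc (DihedralGroup n) H g).Connected ∧
      (gnc (DihedralGroup n) H g).diam ≤ 2) := by
  classical
  have he2 : n % 2 = 0 := Nat.even_iff.mp hne
  have ho2 : (n/2) % 2 = 1 := Nat.odd_iff.mp hodd
  have hn10 : 10 ≤ n := by omega
  have hmod : n % 4 = 2 := by omega
  have h2 : (2:ℕ) ∣ n := ⟨n/2, by omega⟩
  -- `r (n/2)` is not in `H`
  have hval : ∀ ε : ZMod 2, phi n h2 ε (DihedralGroup.r ((n/2 : ℕ) : ZMod n)) ≠ 1 := by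
    intro ε hcontra
    rw [phi_r, map_natCast, ← ZMod.natCast_mod (n/2) 2, ho2, Nat.cast_one,
      ofAdd_eq_one] at hcontra
    exact one_ne_zero hcontra
  have hr2 : ∀ ε : ZMod 2, phi n h2 ε ((DihedralGroup.r 1 : DihedralGroup n) ^ 2) = 1 := by
    intro ε
    rw [show ((2:ℕ) = 2) from rfl] at *
    rw [show ((DihedralGroup.r 1 : DihedralGroup n) ^ 2) =
      (DihedralGroup.r 1 : DihedralGroup n) ^ (2:ℕ) from rfl, DihedralGroup.r_one_pow,
      phi_r, map_natCast, ofAdd_eq_one]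
    decide
  have hhalf : (DihedralGroup.r ((n/2 : ℕ) : ZMod n) : DihedralGroup n) ∉ H := by
    rcases hH with rfl|rfl
    · intro hmem
      have hker : Subgroup.closure
          {(DihedralGroup.r 1 : DihedralGroup n) ^ 2, DihedralGroup.sr 0} ≤
          (phi n h2 0).ker := by
        rw [Subgroup.closure_le]
        rintro x hx
        rcases hx with rfl | rfl
        · exact hr2 0
        · show phi n h2 0 (DihedralGroup.sr 0) = 1
          rw [phi_sr, map_zero, add_zero, ofAdd_zero]
      exact hval 0 (hker hmem)
    · intro hmem
      have hker : Subgroup.closure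
          {(DihedralGroup.r 1 : DihedralGroup n) ^ 2,
            (DihedralGroup.r 1 : DihedralGroup n) * DihedralGroup.sr 0} ≤
          (phi n h2 1).ker := by
        rw [Subgroup.closure_le]
        rintro x hx
        rcases hx with rfl | rfl
        · exact hr2 1
        · show phi n h2 1 ((DihedralGroup.r 1 : DihedralGroup n) * DihedralGroup.sr 0) = 1
          rw [DihedralGroup.r_mul_sr, phi_sr, zero_sub, map_neg, map_one,
            neg_add_cancel, ofAdd_zero]
      exact hval 1 (hker hmem)
  constructor
  · -- case g = 1
    rintro rfl hconn
    have hw0 : (DihedralGroup.r ((n/2 : ℕ) : ZMod n) : DihedralGroup n) ∈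
        (relCenter (DihedralGroup n) H)ᶜ := fun hmem => hhalf hmem.1
    have hsr0 : (DihedralGroup.sr 0 : DihedralGroup n) ∈
        (relCenter (DihedralGroup n) H)ᶜ := by
      intro hmem
      have h11 := hmem.2 (DihedralGroup.r 1)
      rw [DihedralGroup.sr_mul_r, DihedralGroup.r_mul_sr] at h11
      rw [DihedralGroup.sr.injEq] at h11
      have h20 : ((2:ℕ) : ZMod n) = 0 := by push_cast; linear_combination h11
      rw [ZMod.natCast_eq_zero_iff] at h20
      exact absurd (Nat.le_of_dvd (by norm_num) h20) (by omega)
    have hcent : ∀ y : DihedralGroup n,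
        comm' (DihedralGroup.r ((n/2 : ℕ) : ZMod n) : DihedralGroup n) y = 1 := by
      rintro (j|j)
      · exact comm'_r_r _ _
      · rw [comm'_r_sr]
        have hv : (2 * ((n/2 : ℕ) : ZMod n) : ZMod n) = 0 := by
          have hnn : (2*(n/2) : ℕ) = n := by omega
          calc (2 * ((n/2 : ℕ) : ZMod n) : ZMod n) = ((2*(n/2) : ℕ) : ZMod n) := by
                push_cast; ring
            _ = ((n:ℕ) : ZMod n) := by rw [hnn]
            _ = 0 := ZMod.natCast_self n
        rw [hv, neg_zero, ← DihedralGroup.one_def]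
    have hiso : ∀ z, ¬ (gnc (DihedralGroup n) H 1).Adj
        ⟨DihedralGroup.r ((n/2 : ℕ) : ZMod n), hw0⟩ z :=
      fun z hadj => hadj.2.2.1 (hcent z)
    have heq := reachable_eq_of_no_adj hiso
      (hconn.preconnected ⟨DihedralGroup.r ((n/2 : ℕ) : ZMod n), hw0⟩
        ⟨DihedralGroup.sr 0, hsr0⟩)
    rw [Subtype.mk.injEq] at heq
    cases heq
  · -- case g ≠ 1
    intro hg1
    obtain ⟨k, hk⟩ := Subgroup.mem_zpowers_iff.mp hg
    have hgr : g = DihedralGroup.r ((2*k : ℤ) : ZMod n) := by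
      rw [← hk, ← zpow_natCast ((DihedralGroup.r 1 : DihedralGroup n)) 2, ← zpow_mul,
        r_one_zpow']
      norm_num
    set c : ZMod n := ((2*k : ℤ) : ZMod n) with hcdef
    have hc0 : c ≠ 0 := by
      intro h
      exact hg1 (by rw [hgr, h, ← DihedralGroup.one_def])
    obtain ⟨s, hs, hx0, hxc, hxnc⟩ := choose_s n hn10 hmod c
    set t : ZMod n := ((2*s : ℕ) : ZMod n) with htdef
    have h2t : (2 * t : ZMod n) = ((4*s : ℕ) : ZMod n) := by rw [htdef]; push_cast; ring
    have hvH : (DihedralGroup.r t : DihedralGroup n) ∈ H := by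
      have hgen : (DihedralGroup.r 1 : DihedralGroup n)^2 ∈ H := by
        rcases hH with rfl|rfl <;> exact Subgroup.subset_closure (Set.mem_insert _ _)
      have hveq : (DihedralGroup.r t : DihedralGroup n) =
          ((DihedralGroup.r 1 : DihedralGroup n)^2)^s := by
        rw [← pow_mul, DihedralGroup.r_one_pow]
      rw [hveq]
      exact pow_mem hgen s
    have hvc : (DihedralGroup.r t : DihedralGroup n) ∈
        (relCenter (DihedralGroup n) H)ᶜ := by
      intro hmem
      have hcmm := hmem.2 (DihedralGroup.sr 0)
      rw [DihedralGroup.r_mul_sr, DihedralGroup.sr_mul_r, DihedralGroup.sr.injEq] at hcmm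
      exact hx0 (by rw [← h2t]; linear_combination -hcmm)
    have hginv1 : (1 : DihedralGroup n) ≠ g⁻¹ := by
      intro h
      exact hg1 (inv_eq_one.mp h.symm)
    have hadj : ∀ w, w ≠ (⟨DihedralGroup.r t, hvc⟩ :
        ((relCenter (DihedralGroup n) H)ᶜ : Set (DihedralGroup n))) →
        (gnc (DihedralGroup n) H g).Adj ⟨DihedralGroup.r t, hvc⟩ w := by
      rintro ⟨y, hy⟩ hw
      refine ⟨fun h => hw h.symm, Or.inl hvH, ?_⟩
      rcases y with j|j
      · rw [comm'_r_r]
        exact ⟨fun h => hg1 h.symm, hginv1⟩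
      · rw [comm'_r_sr, hgr]
        constructor
        · intro h
          rw [DihedralGroup.r.injEq] at h
          exact hxnc (by rw [← h2t]; linear_combination -h)
        · show ¬ _ = DihedralGroup.r (-c)
          intro h
          rw [DihedralGroup.r.injEq] at h
          exact hxc (by rw [← h2t]; linear_combination -h)
    refine ⟨⟨⟨DihedralGroup.r t, hvc⟩, hadj⟩, ?_, ?_⟩
    · rw [SimpleGraph.connected_iff]
      refine ⟨?_, ⟨⟨DihedralGroup.r t, hvc⟩⟩⟩
      intro x y
      by_cases hxy : x = y
      · rw [hxy]
      by_cases hx : x = ⟨DihedralGroup.r t, hvc⟩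
      · subst hx
        exact ((hadj y (fun h => hxy h.symm))).reachable
      by_cases hy : y = ⟨DihedralGroup.r t, hvc⟩
      · subst hy
        exact ((hadj x hx)).reachable.symm
      · exact ((hadj x hx)).reachable.symm.trans ((hadj y hy)).reachable
    · have hone : ∀ z, (gnc (DihedralGroup n) H g).edist ⟨DihedralGroup.r t, hvc⟩ z ≤ 1 := by
        intro z
        by_cases hz : z = ⟨DihedralGroup.r t, hvc⟩
        · rw [hz, SimpleGraph.edist_self]
          exact zero_le_one
        · exact le_of_eq (SimpleGraph.edist_eq_one_iff_adj.mpr (hadj z hz))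
      have hee : (gnc (DihedralGroup n) H g).ediam ≤ 2 := by
        apply SimpleGraph.ediam_le_of_edist_le
        intro u w
        calc (gnc (DihedralGroup n) H g).edist u w
            ≤ (gnc (DihedralGroup n) H g).edist u ⟨DihedralGroup.r t, hvc⟩ +
              (gnc (DihedralGroup n) H g).edist ⟨DihedralGroup.r t, hvc⟩ w :=
              SimpleGraph.edist_triangle
          _ ≤ 1 + 1 := add_le_add
              (by rw [SimpleGraph.edist_comm]; exact hone u) (hone w)
          _ = 2 := by norm_num
      have := ENat.toNat_le_toNat hee (by simp)
      simpa [SimpleGraph.diam] using this
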